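/- arXiv:1306.4683 — 6 statements merged into one kernel-verified Lean document; each statement's English description precedes it below -/
import Mathlib

section
/- Let {ρ_i}_{i=1}^k be density matrices on a d-dimensional complex Hilbert space, prepared with probabilities p_i, and write ρ̃_i = p_i ρ_i. Let {M_i}_{i=1}^k be a measurement (POVM) such that the matrix N = ∑_{i=1}^k ρ̃_i M_i is Hermitian and ρ̃_i − N is positive semidefinite for every i. Then {M_i} is an optimal exclusion measurement: for every measurement (POVM) {M'_i}_{i=1}^k, ∑_{i=1}^k tr(ρ̃_i M_i) ≤ ∑_{i=1}^k tr(ρ̃_i M'_i). (Sufficiency direction of Theorem 1.) -/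
open Matrix BigOperators ComplexOrder

lemma psd_trace_nonneg {n : ℕ} {C : Matrix (Fin n) (Fin n) ℂ}
    (hC : C.PosSemidef) : 0 ≤ C.trace := by
  rw [Matrix.trace]
  apply Finset.sum_nonneg
  intro i _
  exact hC.diag_nonneg

lemma psd_trace_mul_nonneg {n : ℕ} {A B : Matrix (Fin n) (Fin n) ℂ}
    (hA : A.PosSemidef) (hB : B.PosSemidef) : 0 ≤ (A * B).trace := by
  open scoped MatrixOrder in
  have h : (A * B).trace = ((CFC.sqrt A).conjTranspose * B * CFC.sqrt A).trace := by
    rw [(CFC.sqrt_nonneg A).posSemidef.isHermitian.eq, Matrix.trace_mul_cycle, CFC.sqrt_mul_sqrt_self A hA.nonneg]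
  rw [h]
  exact psd_trace_nonneg (hB.conjTranspose_mul_mul_same (CFC.sqrt A))

/-- Sufficiency direction of Theorem 1: if `N = ∑ ρ̃ᵢ Mᵢ` is Hermitian and
`ρ̃ᵢ - N` is positive semidefinite for all `i`, then the measurement `M`
is optimal for state exclusion. -/
theorem state_exclusion_optimal_of_dual_feasible
    {d k : ℕ} (ρ : Fin k → Matrix (Fin d) (Fin d) ℂ)
    (hρ : ∀ i, (ρ i).PosSemidef) (hρtr : ∀ i, (ρ i).trace = 1)
    (p : Fin k → ℝ) (hp : ∀ i, 0 ≤ p i) (hpsum : ∑ i, p i = 1)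
    (M : Fin k → Matrix (Fin d) (Fin d) ℂ)
    (hM : ∀ i, (M i).PosSemidef) (hMsum : ∑ i, M i = 1)
    (hNherm : (∑ i, (p i : ℂ) • ρ i * M i).IsHermitian)
    (hNfeas : ∀ i, ((p i : ℂ) • ρ i - ∑ j, (p j : ℂ) • ρ j * M j).PosSemidef) :
    ∀ M' : Fin k → Matrix (Fin d) (Fin d) ℂ,
      (∀ i, (M' i).PosSemidef) → (∑ i, M' i = 1) →
      (∑ i, ((p i : ℂ) • ρ i * M i).trace).re ≤ (∑ i, ((p i : ℂ) • ρ i * M' i).trace).re := by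
  intro M' hM' hM'sum
  set N : Matrix (Fin d) (Fin d) ℂ := ∑ j, (p j : ℂ) • ρ j * M j with hN
  have key : ∑ i, ((p i : ℂ) • ρ i * M' i).trace
      = N.trace + ∑ i, (((p i : ℂ) • ρ i - N) * M' i).trace := by
    have h1 : ∑ i, (N * M' i).trace = N.trace := by
      rw [← Matrix.trace_sum]
      rw [← Finset.mul_sum, hM'sum, mul_one]
    calc ∑ i, ((p i : ℂ) • ρ i * M' i).trace
        = ∑ i, ((((p i : ℂ) • ρ i - N) * M' i).trace + (N * M' i).trace) := by
          apply Finset.sum_congr rfl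
          intro i _
          rw [← Matrix.trace_add, ← Matrix.add_mul, sub_add_cancel]
      _ = ∑ i, (((p i : ℂ) • ρ i - N) * M' i).trace + ∑ i, (N * M' i).trace := by
          rw [Finset.sum_add_distrib]
      _ = N.trace + ∑ i, (((p i : ℂ) • ρ i - N) * M' i).trace := by rw [h1]; ring
  have hS : 0 ≤ ∑ i, (((p i : ℂ) • ρ i - N) * M' i).trace := by
    apply Finset.sum_nonneg
    intro i _
    exact psd_trace_mul_nonneg (hNfeas i) (hM' i)
  have hL : ∑ i, ((p i : ℂ) • ρ i * M i).trace = N.trace := by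
    rw [hN, Matrix.trace_sum]
  rw [hL, key]
  simp only [Complex.add_re]
  have : 0 ≤ (∑ i, (((p i : ℂ) • ρ i - N) * M' i).trace).re := by
    exact_mod_cast (Complex.le_def.mp hS).1
  linarith
end

section
/- Let {ρ_i}_{i=1}^k be density matrices on a d-dimensional complex Hilbert space, prepared with probabilities p_i, and write ρ̃_i = p_i ρ_i. Suppose {M_i}_{i=1}^k is a measurement (POVM) that is optimal for state exclusion, i.e. ∑_{i=1}^k tr(ρ̃_i M_i) ≤ ∑_{i=1}^k tr(ρ̃_i M'_i) for every measurement (POVM) {M'_i}_{i=1}^k. Then the matrix N = ∑_{i=1}^k ρ̃_i M_i is Hermitian and ρ̃_i − N is positive semidefinite for every i. (Necessity direction of Theorem 1.) -/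
open Matrix BigOperators ComplexOrder

section StateExclusionAux

set_option linter.unusedSectionVars false

variable {n : Type*} [Fintype n] [DecidableEq n]

private lemma trace_mul_vmv (A : Matrix n n ℂ) (x : n → ℂ) :
    (A * vecMulVec x (star x)).trace = star x ⬝ᵥ A *ᵥ x := by
  simp only [Matrix.trace, Matrix.diag, Matrix.mul_apply, vecMulVec_apply, dotProduct, mulVec,
    Pi.star_apply, Finset.mul_sum, Finset.sum_mul]
  exact Finset.sum_congr rfl fun a _ => Finset.sum_congr rfl fun b _ => by ring

private lemma vmv_conjTranspose (x : n → ℂ) :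
    (vecMulVec x (star x))ᴴ = vecMulVec x (star x) := by
  ext a b
  simp [vecMulVec_apply, mul_comm]

private lemma vmv_mul_mul_vmv (A : Matrix n n ℂ) (x : n → ℂ) :
    vecMulVec x (star x) * A * vecMulVec x (star x)
      = (star x ⬝ᵥ A *ᵥ x) • vecMulVec x (star x) := by
  ext a b
  simp only [Matrix.mul_apply, vecMulVec_apply, Pi.star_apply, Matrix.smul_apply, dotProduct, mulVec,
    smul_eq_mul, Finset.mul_sum, Finset.sum_mul]
  rw [Finset.sum_comm]
  exact Finset.sum_congr rfl fun c _ => Finset.sum_congr rfl fun e _ => by ring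

private lemma vmv_posSemidef (x : n → ℂ) : (vecMulVec x (star x)).PosSemidef := by
  refine Matrix.PosSemidef.of_dotProduct_mulVec_nonneg (vmv_conjTranspose x) fun y => ?_
  have h : star y ⬝ᵥ (vecMulVec x (star x)) *ᵥ y
      = (star y ⬝ᵥ x) * (starRingEnd ℂ) (star y ⬝ᵥ x) := by
    simp only [dotProduct, mulVec, vecMulVec_apply, Pi.star_apply, map_sum,
      Finset.mul_sum, Finset.sum_mul, starRingEnd_apply, star_mul', star_star]
    rw [Finset.sum_comm]
    exact Finset.sum_congr rfl fun a _ => Finset.sum_congr rfl fun b _ => by ring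
  rw [h, Complex.mul_conj]
  exact_mod_cast Complex.zero_le_real.mpr (Complex.normSq_nonneg _)

private lemma dot_conjTranspose (A : Matrix n n ℂ) (x : n → ℂ) :
    star x ⬝ᵥ Aᴴ *ᵥ x = (starRingEnd ℂ) (star x ⬝ᵥ A *ᵥ x) := by
  simp only [dotProduct, mulVec, conjTranspose_apply, Pi.star_apply, map_sum,
    Finset.mul_sum, starRingEnd_apply, star_mul', star_star]
  rw [Finset.sum_comm]
  exact Finset.sum_congr rfl fun a _ => Finset.sum_congr rfl fun b _ => by ring

private lemma dot_self_real (x : n → ℂ) :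
    star x ⬝ᵥ x = ((∑ i, Complex.normSq (x i) : ℝ) : ℂ) := by
  push_cast
  simp only [dotProduct, Pi.star_apply]
  exact Finset.sum_congr rfl fun i _ => by
    rw [show star (x i) = (starRingEnd ℂ) (x i) from rfl, mul_comm, Complex.mul_conj]

private lemma lim_nonpos {a C ε₀ : ℝ} (hε₀ : 0 < ε₀)
    (h : ∀ ε : ℝ, 0 < ε → ε ≤ ε₀ → a ≤ ε * C) : a ≤ 0 := by
  by_contra h'
  push_neg at h'
  have hC : 0 < |C| + 1 := by positivity
  set ε : ℝ := min ε₀ (a / (2 * (|C| + 1))) with hε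
  have h1 : 0 < ε := lt_min hε₀ (by positivity)
  have h2 := h ε h1 (min_le_left _ _)
  have h3 : ε * C ≤ ε * (|C| + 1) := by
    have := le_abs_self C
    nlinarith
  have h4 : ε ≤ a / (2 * (|C| + 1)) := min_le_right _ _
  have h4' : ε * (2 * (|C| + 1)) ≤ a := by
    rw [← le_div_iff₀ (by positivity)]
    exact h4
  have h5 : ε * (|C| + 1) ≤ a / 2 := by nlinarith
  nlinarith

private lemma psd_smul_real {A : Matrix n n ℂ} (hA : A.PosSemidef) {c : ℝ} (hc : 0 ≤ c) :
    ((c : ℂ) • A).PosSemidef := by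
  refine Matrix.PosSemidef.of_dotProduct_mulVec_nonneg ?_ ?_
  · unfold Matrix.IsHermitian
    rw [conjTranspose_smul, hA.1.eq]
    congr 1
    simp
  · intro x
    rw [smul_mulVec, dotProduct_smul, smul_eq_mul]
    exact mul_nonneg (by exact_mod_cast Complex.zero_le_real.mpr hc) (hA.dotProduct_mulVec_nonneg x)

private lemma single_dot_single (A : Matrix n n ℂ) (a b : n) (c c' : ℂ) :
    star (Pi.single a c) ⬝ᵥ A *ᵥ (Pi.single b c') = star c * A a b * c' := by
  simp [dotProduct, mulVec, Pi.single_apply, apply_ite, mul_ite, ite_mul, Finset.mul_sum,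
    Finset.sum_ite_eq', mul_comm, mul_assoc, mul_left_comm]

private lemma quad_expand (A : Matrix n n ℂ) (a b : n) (c : ℂ) :
    star (Pi.single a 1 + Pi.single b c) ⬝ᵥ A *ᵥ (Pi.single a 1 + Pi.single b c)
      = A a a + A a b * c + star c * A b a + star c * A b b * c := by
  rw [star_add, add_dotProduct, mulVec_add, dotProduct_add, dotProduct_add]
  rw [single_dot_single, single_dot_single, single_dot_single, single_dot_single]
  simp only [star_one, one_mul, mul_one]
  ring

private lemma herm_of_im_eq_zero {A : Matrix n n ℂ}
    (h : ∀ x : n → ℂ, (star x ⬝ᵥ A *ᵥ x).im = 0) : A.IsHermitian := by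
  have h0 : ∀ a : n, (A a a).im = 0 := by
    intro a
    have := h (Pi.single a 1)
    rw [single_dot_single] at this
    simpa using this
  ext a b
  rw [conjTranspose_apply]
  by_cases hab : a = b
  · subst hab
    rw [RCLike.star_def, Complex.conj_eq_iff_im]
    exact h0 a
  · have h1 := h (Pi.single b 1 + Pi.single a (1 : ℂ))
    have h2 := h (Pi.single b 1 + Pi.single a (Complex.I))
    rw [quad_expand] at h1 h2
    simp only [star_one, one_mul, mul_one, RCLike.star_def, Complex.conj_I] at h1 h2
    apply Complex.ext
    · have e2 : (A b b).im + (A b a).re - (A a b).re + (A a a).im = 0 := by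
        have e : (A b b + A b a * Complex.I + -Complex.I * A a b
            + -Complex.I * A a a * Complex.I).im
            = (A b b).im + (A b a).re - (A a b).re + (A a a).im := by
          simp [Complex.add_im, Complex.mul_im, Complex.mul_re]
          ring
        rw [e] at h2
        exact h2
      have := h0 a; have := h0 b
      simp only [RCLike.star_def, Complex.conj_re]
      linarith
    · have e1 : (A b b).im + (A b a).im + (A a b).im + (A a a).im = 0 := by
        simpa [Complex.add_im] using h1
      have := h0 a; have := h0 b
      simp only [RCLike.star_def, Complex.conj_im]
      linarith

private lemma dot_sum_mulVec {ι : Type*} (s : Finset ι) (F : ι → Matrix n n ℂ) (x : n → ℂ) :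
    star x ⬝ᵥ (∑ i ∈ s, F i) *ᵥ x = ∑ i ∈ s, star x ⬝ᵥ F i *ᵥ x := by
  classical
  induction s using Finset.induction with
  | empty => simp
  | insert _ _ h ih =>
      rw [Finset.sum_insert h, Finset.sum_insert h, Matrix.add_mulVec, dotProduct_add, ih]

private lemma trace_A_BP (ρA MA : Matrix n n ℂ) (x : n → ℂ) :
    (ρA * (MA * vecMulVec x (star x))).trace = star x ⬝ᵥ (ρA * MA) *ᵥ x := by
  rw [← mul_assoc, trace_mul_vmv]

private lemma trace_A_PB (ρA MA : Matrix n n ℂ) (x : n → ℂ) :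
    (ρA * (vecMulVec x (star x) * MA)).trace = star x ⬝ᵥ (MA * ρA) *ᵥ x := by
  rw [← mul_assoc, Matrix.trace_mul_comm, ← mul_assoc, trace_mul_vmv]

private lemma trace_A_PBP (ρA MA : Matrix n n ℂ) (x : n → ℂ) :
    (ρA * (vecMulVec x (star x) * MA * vecMulVec x (star x))).trace
      = (star x ⬝ᵥ MA *ᵥ x) * (star x ⬝ᵥ ρA *ᵥ x) := by
  rw [vmv_mul_mul_vmv, Matrix.mul_smul, Matrix.trace_smul, trace_mul_vmv, smul_eq_mul]

end StateExclusionAux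

/-- Necessity direction of Theorem 1: if the measurement `M` is optimal for
state exclusion, then `N = ∑ ρ̃ᵢ Mᵢ` is Hermitian and `ρ̃ᵢ - N` is positive
semidefinite for all `i`. -/
theorem state_exclusion_dual_feasible_of_optimal
    {d k : ℕ} (ρ : Fin k → Matrix (Fin d) (Fin d) ℂ)
    (hρ : ∀ i, (ρ i).PosSemidef) (hρtr : ∀ i, (ρ i).trace = 1)
    (p : Fin k → ℝ) (hp : ∀ i, 0 ≤ p i) (hpsum : ∑ i, p i = 1)
    (M : Fin k → Matrix (Fin d) (Fin d) ℂ)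
    (hM : ∀ i, (M i).PosSemidef) (hMsum : ∑ i, M i = 1)
    (hopt : ∀ M' : Fin k → Matrix (Fin d) (Fin d) ℂ,
      (∀ i, (M' i).PosSemidef) → (∑ i, M' i = 1) →
      (∑ i, ((p i : ℂ) • ρ i * M i).trace).re ≤ (∑ i, ((p i : ℂ) • ρ i * M' i).trace).re) :
    (∑ i, (p i : ℂ) • ρ i * M i).IsHermitian ∧
    ∀ i, ((p i : ℂ) • ρ i - ∑ j, (p j : ℂ) • ρ j * M j).PosSemidef := by
  classical
  have hk : 0 < k := by
    rcases Nat.eq_zero_or_pos k with hk | hk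
    · subst hk
      simp at hpsum
    · exact hk
  set N : Matrix (Fin d) (Fin d) ℂ := ∑ i, (p i : ℂ) • ρ i * M i with hN
  -- Hermiticity facts about the weighted states
  have hρth : ∀ i, ((p i : ℂ) • ρ i).IsHermitian := by
    intro i
    have h1 := (hρ i).1
    unfold Matrix.IsHermitian at h1 ⊢
    rw [conjTranspose_smul, h1]
    congr 1
    exact Complex.conj_ofReal _
  have hρtpsd : ∀ i, ((p i : ℂ) • ρ i).PosSemidef := fun i => psd_smul_real (hρ i) (hp i)
  -- The master inequality coming from optimality against rank-one perturbations
  have master : ∀ (j : Fin k) (x : Fin d → ℂ) (w : ℂ), 0 < w.re →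
      ((starRingEnd ℂ) w * (star x ⬝ᵥ N *ᵥ x)).re
        ≤ w.re * (star x ⬝ᵥ ((p j : ℂ) • ρ j) *ᵥ x).re := by
    intro j x w hw
    set P : Matrix (Fin d) (Fin d) ℂ := vecMulVec x (star x) with hPdef
    set nx : ℝ := ∑ i, Complex.normSq (x i) with hnxdef
    have hnx0 : 0 ≤ nx := Finset.sum_nonneg fun i _ => Complex.normSq_nonneg _
    have hxx : star x ⬝ᵥ x = (nx : ℂ) := dot_self_real x
    set z : ℂ := star x ⬝ᵥ N *ᵥ x with hzdef
    set R : ℝ := (star x ⬝ᵥ ((p j : ℂ) • ρ j) *ᵥ x).re with hRdef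
    set T : ℝ := (∑ i, (star x ⬝ᵥ (M i) *ᵥ x) * (star x ⬝ᵥ ((p i : ℂ) • ρ i) *ᵥ x)).re with hTdef
    have key : ((starRingEnd ℂ) w * z).re - w.re * R ≤ 0 := by
      have hden : 0 < Complex.normSq w * nx + 1 := by
        nlinarith [Complex.normSq_nonneg w, hnx0]
      apply lim_nonpos (ε₀ := w.re / (Complex.normSq w * nx + 1))
        (C := Complex.normSq w * (T - nx * R) / 2)
        (div_pos hw hden)
      intro ε hε hεle
      have hεb : ε * (Complex.normSq w * nx + 1) ≤ w.re := by
        rw [← le_div_iff₀ hden]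
        exact hεle
      set a : ℂ := (ε : ℂ) * w with ha
      set B : Matrix (Fin d) (Fin d) ℂ := 1 - a • P with hB
      set c : ℝ := 2 * ε * w.re - ε ^ 2 * Complex.normSq w * nx with hc
      have hc0 : 0 ≤ c := by
        have h1 : ε * (Complex.normSq w * nx) ≤ w.re := by nlinarith
        nlinarith
      have hBH : Bᴴ = 1 - star a • P := by
        rw [hB, conjTranspose_sub, conjTranspose_smul, conjTranspose_one, vmv_conjTranspose]
      have hPP : P * P = (nx : ℂ) • P := by
        have := vmv_mul_mul_vmv (1 : Matrix (Fin d) (Fin d) ℂ) x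
        rw [Matrix.mul_one, Matrix.one_mulVec, hxx] at this
        exact this
      -- scalar identity for the deficiency coefficient
      have hstara : star a = (ε : ℂ) * (starRingEnd ℂ) w := by
        rw [ha, star_mul']
        congr 1
        rw [RCLike.star_def, Complex.conj_ofReal]
      have haa : a * star a = ((ε ^ 2 * Complex.normSq w : ℝ) : ℂ) := by
        rw [ha, hstara]
        push_cast
        rw [show (ε:ℂ) * w * ((ε:ℂ) * (starRingEnd ℂ) w) = (ε:ℂ)^2 * (w * (starRingEnd ℂ) w) by
          ring, Complex.mul_conj]
      have hasum : a + star a = ((2 * ε * w.re : ℝ) : ℂ) := by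
        rw [ha, hstara, ← mul_add, Complex.add_conj]
        push_cast
        ring
      -- the perturbed POVM
      set M' : Fin k → Matrix (Fin d) (Fin d) ℂ :=
        fun i => B * M i * Bᴴ + (if i = j then (c : ℂ) • P else 0) with hM'def
      have hM'psd : ∀ i, (M' i).PosSemidef := by
        intro i
        apply Matrix.PosSemidef.add ((hM i).mul_mul_conjTranspose_same B)
        by_cases hij : i = j
        · simpa [hij] using psd_smul_real (vmv_posSemidef x) hc0
        · simp only [hij, if_false]
          exact ⟨by simp [Matrix.IsHermitian], fun y => by simp⟩
      have hM'sum : ∑ i, M' i = 1 := by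
        rw [hM'def]
        rw [Finset.sum_add_distrib, Finset.sum_ite_eq' Finset.univ j fun _ => (c : ℂ) • P]
        simp only [Finset.mem_univ, if_true]
        have h1 : ∑ i, B * M i * Bᴴ = B * Bᴴ := by
          rw [← Finset.sum_mul, ← Finset.mul_sum, hMsum, Matrix.mul_one]
        rw [h1, hBH, hB]
        have hca : (c : ℂ) = (a + star a) - a * star a * (nx : ℂ) := by
          rw [haa, hasum, hc]
          push_cast
          ring
        have expand : (1 - a • P) * (1 - star a • P)
            = 1 - star a • P - a • P + (a * star a * (nx : ℂ)) • P := by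
          rw [mul_sub, mul_one, sub_mul, one_mul, smul_mul_assoc, Matrix.mul_smul, hPP,
            smul_smul, smul_smul]
          abel
        rw [expand, hca]
        module
      -- expansion of B * X * Bᴴ
      have hBMB : ∀ X : Matrix (Fin d) (Fin d) ℂ,
          B * X * Bᴴ = X - star a • (X * P) - a • (P * X) + (a * star a) • (P * X * P) := by
        intro X
        rw [hBH, hB]
        rw [sub_mul, one_mul, mul_sub, mul_one, sub_mul, smul_mul_assoc, smul_mul_assoc,
          Matrix.mul_smul, Matrix.mul_smul, smul_smul]
        abel
      -- trace of each perturbed term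
      have htr : ∀ i, (((p i : ℂ) • ρ i) * M' i).trace
          = (((p i : ℂ) • ρ i) * M i).trace
            - star a * (star x ⬝ᵥ (((p i : ℂ) • ρ i) * M i) *ᵥ x)
            - a * (star x ⬝ᵥ (M i * ((p i : ℂ) • ρ i)) *ᵥ x)
            + (a * star a) * ((star x ⬝ᵥ (M i) *ᵥ x) * (star x ⬝ᵥ ((p i : ℂ) • ρ i) *ᵥ x))
            + (if i = j then (c : ℂ) * (star x ⬝ᵥ ((p i : ℂ) • ρ i) *ᵥ x) else 0) := by
        intro i
        have hM'i : M' i = B * M i * Bᴴ + (if i = j then (c : ℂ) • P else 0) := by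
          rw [hM'def]
        rw [hM'i, Matrix.mul_add, Matrix.trace_add, hBMB]
        congr 1
        · rw [Matrix.mul_add, Matrix.mul_sub, Matrix.mul_sub, Matrix.trace_add,
            Matrix.trace_sub, Matrix.trace_sub, Matrix.mul_smul, Matrix.mul_smul,
            Matrix.mul_smul, Matrix.trace_smul, Matrix.trace_smul, Matrix.trace_smul,
            trace_A_BP, trace_A_PB, trace_A_PBP]
          simp only [smul_eq_mul]
        · by_cases hij : i = j
          · simp only [hij, if_true]
            rw [Matrix.mul_smul, Matrix.trace_smul, trace_mul_vmv, smul_eq_mul]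
          · simp [hij]
      -- sum the traces
      have hsum1 : ∑ i, star x ⬝ᵥ (((p i : ℂ) • ρ i) * M i) *ᵥ x = z := by
        rw [hzdef, hN, dot_sum_mulVec]
      have hsum2 : ∑ i, star x ⬝ᵥ (M i * ((p i : ℂ) • ρ i)) *ᵥ x = (starRingEnd ℂ) z := by
        rw [hzdef, hN, dot_sum_mulVec, map_sum]
        refine Finset.sum_congr rfl fun i _ => ?_
        rw [← dot_conjTranspose]
        congr 1
        rw [conjTranspose_mul, (hρth i).eq, (hM i).1.eq]
      have hval : (∑ i, (((p i : ℂ) • ρ i) * M' i).trace)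
          = (∑ i, (((p i : ℂ) • ρ i) * M i).trace)
            - star a * z - a * (starRingEnd ℂ) z
            + (a * star a) * (∑ i, (star x ⬝ᵥ (M i) *ᵥ x) * (star x ⬝ᵥ ((p i : ℂ) • ρ i) *ᵥ x))
            + (c : ℂ) * (star x ⬝ᵥ ((p j : ℂ) • ρ j) *ᵥ x) := by
        rw [Finset.sum_congr rfl fun i _ => htr i]
        rw [Finset.sum_add_distrib, Finset.sum_add_distrib, Finset.sum_sub_distrib,
          Finset.sum_sub_distrib, ← Finset.mul_sum, ← Finset.mul_sum, ← Finset.mul_sum,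
          hsum1, hsum2, Finset.sum_ite_eq' Finset.univ j]
        simp only [Finset.mem_univ, if_true]
      have hle := hopt M' hM'psd hM'sum
      rw [hval] at hle
      -- pass to real parts
      have hre1 : (star a * z).re = ε * ((starRingEnd ℂ) w * z).re := by
        rw [hstara, mul_assoc, Complex.re_ofReal_mul]
      have hre2 : (a * (starRingEnd ℂ) z).re = ε * ((starRingEnd ℂ) w * z).re := by
        have : a * (starRingEnd ℂ) z = (starRingEnd ℂ) (star a * z) := by
          simp only [starRingEnd_apply, star_mul', star_star]
        rw [this, Complex.conj_re, hre1]
      have hre3 : ((a * star a) *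
          (∑ i, (star x ⬝ᵥ (M i) *ᵥ x) * (star x ⬝ᵥ ((p i : ℂ) • ρ i) *ᵥ x))).re
          = ε ^ 2 * Complex.normSq w * T := by
        rw [haa, Complex.re_ofReal_mul]
      have hre4 : ((c : ℂ) * (star x ⬝ᵥ ((p j : ℂ) • ρ j) *ᵥ x)).re = c * R := by
        rw [Complex.re_ofReal_mul, hRdef]
      simp only [Complex.add_re, Complex.sub_re, hre1, hre2, hre3, hre4] at hle
      -- now a purely real computation
      have hineq : 0 ≤ -2 * ε * ((starRingEnd ℂ) w * z).re + ε ^ 2 * Complex.normSq w * T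
          + c * R := by linarith
      rw [hc] at hineq
      nlinarith [hineq, hε]
    linarith [key]
  -- N is Hermitian
  have hNh : N.IsHermitian := by
    apply herm_of_im_eq_zero
    intro x
    set z : ℂ := star x ⬝ᵥ N *ᵥ x with hzdef
    set j : Fin k := ⟨0, hk⟩ with hj
    set R : ℝ := (star x ⬝ᵥ ((p j : ℂ) • ρ j) *ᵥ x).re with hRdef
    have h1 : z.im ≤ 0 := by
      apply lim_nonpos (ε₀ := 1) one_pos (C := R - z.re)
      intro δ hδ _
      have hwre : ((δ : ℂ) + Complex.I).re = δ := by simp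
      have hm := master j x ((δ : ℂ) + Complex.I) (by rw [hwre]; exact hδ)
      have hre : ((starRingEnd ℂ) ((δ : ℂ) + Complex.I) * z).re = δ * z.re + z.im := by
        rw [_root_.map_add, Complex.conj_ofReal, Complex.conj_I]
        rw [add_mul, Complex.add_re, Complex.re_ofReal_mul, neg_mul, Complex.neg_re,
          Complex.I_mul_re]
        ring
      rw [hre, hwre] at hm
      linarith
    have h2 : -z.im ≤ 0 := by
      apply lim_nonpos (ε₀ := 1) one_pos (C := R - z.re)
      intro δ hδ _
      have hwre : ((δ : ℂ) - Complex.I).re = δ := by simp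
      have hm := master j x ((δ : ℂ) - Complex.I) (by rw [hwre]; exact hδ)
      have hre : ((starRingEnd ℂ) ((δ : ℂ) - Complex.I) * z).re = δ * z.re - z.im := by
        rw [_root_.map_sub, Complex.conj_ofReal, Complex.conj_I, sub_neg_eq_add]
        rw [add_mul, Complex.add_re, Complex.re_ofReal_mul, Complex.I_mul_re]
        ring
      rw [hre, hwre] at hm
      linarith
    linarith
  refine ⟨hNh, fun i => ?_⟩
  have hherm : ((p i : ℂ) • ρ i - N).IsHermitian := (hρth i).sub hNh
  refine Matrix.PosSemidef.of_dotProduct_mulVec_nonneg hherm fun x => ?_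
  have hre : 0 ≤ (star x ⬝ᵥ ((p i : ℂ) • ρ i - N) *ᵥ x).re := by
    have hm := master i x 1 (by norm_num)
    rw [RingHom.map_one, one_mul, Complex.one_re, one_mul] at hm
    rw [sub_mulVec, dotProduct_sub, Complex.sub_re]
    linarith
  have him : (star x ⬝ᵥ ((p i : ℂ) • ρ i - N) *ᵥ x).im = 0 := by
    have hc := dot_conjTranspose ((p i : ℂ) • ρ i - N) x
    rw [hherm.eq] at hc
    have := congrArg Complex.im hc
    rw [Complex.conj_im] at this
    linarith
  rw [Complex.le_def]
  constructor
  · simpa using hre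
  · simpa using him.symm
end

section
/- Let {ρ_i}_{i=1}^k be density matrices on a d-dimensional complex Hilbert space with k ≥ 2. If single state conclusive exclusion is possible, i.e. there exists a measurement (POVM) {M_i}_{i=1}^k with tr(ρ_i M_i) = 0 for every i, then ∑_{j≠l, j,l=1}^{k} F(ρ_j, ρ_l) ≤ k(k−2), where F denotes the fidelity. (Theorem 2.) -/
open Matrix BigOperators ComplexOrder Classical

/-- The positive semidefinite square root of a matrix (junk value `0` if the
matrix is not positive semidefinite). -/
noncomputable def psqrt {d : ℕ} (A : Matrix (Fin d) (Fin d) ℂ) :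
    Matrix (Fin d) (Fin d) ℂ :=
  if h : A.PosSemidef then
    h.1.eigenvectorUnitary.1 * diagonal ((↑) ∘ (√·) ∘ h.1.eigenvalues) *
      (star h.1.eigenvectorUnitary : Matrix (Fin d) (Fin d) ℂ)
  else 0

/-- The fidelity `F(ρ,σ) = tr((√ρ σ √ρ)^{1/2})` of two positive semidefinite
matrices. -/
noncomputable def fidelity {d : ℕ} (ρ σ : Matrix (Fin d) (Fin d) ℂ) : ℝ :=
  (psqrt (psqrt ρ * σ * psqrt ρ)).trace.re


lemma sum_abs_mul_le {ι : Type*} [Fintype ι] (x y : ι → ℂ) :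
    ∑ i, ‖x i‖ * ‖y i‖ ≤
      Real.sqrt (∑ i, ‖x i‖ ^ 2) * Real.sqrt (∑ i, ‖y i‖ ^ 2) := by
  have h := Finset.sum_mul_sq_le_sq_mul_sq Finset.univ (fun i => ‖x i‖)
    (fun i => ‖y i‖)
  have h0 : 0 ≤ ∑ i, ‖x i‖ * ‖y i‖ :=
    Finset.sum_nonneg fun i _ => mul_nonneg (norm_nonneg _) (norm_nonneg _)
  rw [← Real.sqrt_mul_self h0, ← Real.sqrt_mul (Finset.sum_nonneg fun i _ => sq_nonneg _)]
  exact Real.sqrt_le_sqrt (by rw [← pow_two]; simpa using h)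

lemma dot_cs {d : ℕ} (x y : Fin d → ℂ) :
    ‖star x ⬝ᵥ y‖ ≤ Real.sqrt (star x ⬝ᵥ x).re * Real.sqrt (star y ⬝ᵥ y).re := by
  have hx : (star x ⬝ᵥ x).re = ∑ i, ‖x i‖ ^ 2 := by
    simp only [dotProduct, Complex.re_sum, Pi.star_apply]
    congr 1; funext i
    simp [← Complex.normSq_eq_conj_mul_self, Complex.normSq_eq_norm_sq, ← Complex.ofReal_pow]
  have hy : (star y ⬝ᵥ y).re = ∑ i, ‖y i‖ ^ 2 := by
    simp only [dotProduct, Complex.re_sum, Pi.star_apply]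
    congr 1; funext i
    simp [← Complex.normSq_eq_conj_mul_self, Complex.normSq_eq_norm_sq, ← Complex.ofReal_pow]
  rw [hx, hy]
  calc ‖star x ⬝ᵥ y‖ ≤ ∑ i, ‖(star x) i * y i‖ := by
        simpa [dotProduct] using norm_sum_le Finset.univ (fun i => (star x) i * y i)
    _ = ∑ i, ‖x i‖ * ‖y i‖ := by
        simp [_root_.map_mul]
    _ ≤ _ := sum_abs_mul_le x y



lemma contraction_flip {d : ℕ} {V : Matrix (Fin d) (Fin d) ℂ}
    (h : (1 - Vᴴ * V).PosSemidef) : (1 - V * Vᴴ).PosSemidef := by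
  refine Matrix.PosSemidef.of_dotProduct_mulVec_nonneg ?_ ?_
  · simp [Matrix.IsHermitian, Matrix.conjTranspose_sub, Matrix.conjTranspose_mul]
  · intro x
    obtain ⟨y, hy⟩ : ∃ y, y = Vᴴ *ᵥ x := ⟨_, rfl⟩
    have fact : ∀ z : Fin d → ℂ, star x ⬝ᵥ (V *ᵥ z) = star y ⬝ᵥ z := by
      intro z
      rw [dotProduct_mulVec, hy, star_mulVec, conjTranspose_conjTranspose]
    have factV : ∀ z : Fin d → ℂ, star y ⬝ᵥ (Vᴴ *ᵥ z) = star (V *ᵥ y) ⬝ᵥ z := by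
      intro z
      rw [dotProduct_mulVec, star_mulVec]
      
    have hc : star x ⬝ᵥ ((V * Vᴴ) *ᵥ x) = star y ⬝ᵥ y := by
      rw [← mulVec_mulVec, fact, ← hy]
    have h3 : star (V *ᵥ y) ⬝ᵥ (V *ᵥ y) ≤ star y ⬝ᵥ y := by
      have h2 := h.dotProduct_mulVec_nonneg y
      rw [sub_mulVec, one_mulVec, dotProduct_sub, ← mulVec_mulVec, factV, sub_nonneg] at h2
      exact h2
    have hcnn : (0:ℂ) ≤ star y ⬝ᵥ y := dotProduct_star_self_nonneg y
    have hann : (0:ℂ) ≤ star x ⬝ᵥ x := dotProduct_star_self_nonneg x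
    have hbnn : (0:ℂ) ≤ star (V *ᵥ y) ⬝ᵥ (V *ᵥ y) := dotProduct_star_self_nonneg _
    have key : (star y ⬝ᵥ y).re ≤ (star x ⬝ᵥ x).re := by
      have habs : ‖star x ⬝ᵥ (V *ᵥ y)‖ ≤
          Real.sqrt (star x ⬝ᵥ x).re * Real.sqrt (star (V *ᵥ y) ⬝ᵥ (V *ᵥ y)).re := dot_cs x _
      rw [fact y] at habs
      have hre : (star y ⬝ᵥ y).re ≤ ‖star y ⬝ᵥ y‖ := Complex.re_le_norm _
      have hmono : Real.sqrt (star (V *ᵥ y) ⬝ᵥ (V *ᵥ y)).re ≤ Real.sqrt (star y ⬝ᵥ y).re :=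
        Real.sqrt_le_sqrt ((Complex.le_def.mp h3).1)
      have h4 : (star y ⬝ᵥ y).re ≤ Real.sqrt (star x ⬝ᵥ x).re * Real.sqrt (star y ⬝ᵥ y).re := by
        calc (star y ⬝ᵥ y).re ≤ ‖star y ⬝ᵥ y‖ := hre
          _ ≤ Real.sqrt (star x ⬝ᵥ x).re * Real.sqrt (star (V *ᵥ y) ⬝ᵥ (V *ᵥ y)).re := habs
          _ ≤ Real.sqrt (star x ⬝ᵥ x).re * Real.sqrt (star y ⬝ᵥ y).re := by
              exact mul_le_mul_of_nonneg_left hmono (Real.sqrt_nonneg _)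
      have hcre : 0 ≤ (star y ⬝ᵥ y).re := (Complex.nonneg_iff.mp hcnn).1
      have hare : 0 ≤ (star x ⬝ᵥ x).re := (Complex.nonneg_iff.mp hann).1
      nlinarith [Real.sq_sqrt hcre, Real.sq_sqrt hare, Real.sqrt_nonneg (star y ⬝ᵥ y).re,
        Real.sqrt_nonneg (star x ⬝ᵥ x).re]
    rw [sub_mulVec, one_mulVec, dotProduct_sub, sub_nonneg, hc]
    rw [Complex.le_def]
    exact ⟨key, by rw [← (Complex.nonneg_iff.mp hcnn).2, ← (Complex.nonneg_iff.mp hann).2]⟩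

namespace Matrix.PosSemidef

noncomputable def sqrt {d : ℕ} {A : Matrix (Fin d) (Fin d) ℂ} (h : A.PosSemidef) :
    Matrix (Fin d) (Fin d) ℂ :=
  h.1.eigenvectorUnitary.1 * diagonal ((↑) ∘ (√·) ∘ h.1.eigenvalues) *
    (star h.1.eigenvectorUnitary : Matrix (Fin d) (Fin d) ℂ)

lemma posSemidef_sqrt {d : ℕ} {A : Matrix (Fin d) (Fin d) ℂ} (h : A.PosSemidef) :
    h.sqrt.PosSemidef := by
  have h1 : (diagonal ((↑) ∘ (√·) ∘ h.1.eigenvalues) : Matrix (Fin d) (Fin d) ℂ).PosSemidef :=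
    posSemidef_diagonal_iff.mpr fun i => by
      simpa using (by exact_mod_cast Real.sqrt_nonneg (h.1.eigenvalues i) :
        (0:ℂ) ≤ ↑(√(h.1.eigenvalues i)))
  have h2 := h1.mul_mul_conjTranspose_same (h.1.eigenvectorUnitary : Matrix (Fin d) (Fin d) ℂ)
  rw [← Matrix.star_eq_conjTranspose] at h2
  exact h2

lemma sqrt_mul_self {d : ℕ} {A : Matrix (Fin d) (Fin d) ℂ} (h : A.PosSemidef) :
    h.sqrt * h.sqrt = A := by
  have hs := h.1.spectral_theorem
  rw [Unitary.conjStarAlgAut_apply] at hs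
  have hU : (star h.1.eigenvectorUnitary : Matrix (Fin d) (Fin d) ℂ) *
      (h.1.eigenvectorUnitary : Matrix (Fin d) (Fin d) ℂ) = 1 :=
    mem_unitaryGroup_iff'.mp h.1.eigenvectorUnitary.2
  unfold sqrt
  have e : h.1.eigenvectorUnitary.1 * diagonal ((↑) ∘ (√·) ∘ h.1.eigenvalues) *
      (star h.1.eigenvectorUnitary : Matrix (Fin d) (Fin d) ℂ) *
      (h.1.eigenvectorUnitary.1 * diagonal ((↑) ∘ (√·) ∘ h.1.eigenvalues) *
      (star h.1.eigenvectorUnitary : Matrix (Fin d) (Fin d) ℂ)) =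
      h.1.eigenvectorUnitary.1 * (diagonal ((↑) ∘ (√·) ∘ h.1.eigenvalues) *
      ((star h.1.eigenvectorUnitary : Matrix (Fin d) (Fin d) ℂ) *
      h.1.eigenvectorUnitary.1) * diagonal ((↑) ∘ (√·) ∘ h.1.eigenvalues)) *
      (star h.1.eigenvectorUnitary : Matrix (Fin d) (Fin d) ℂ) := by
    simp only [Matrix.mul_assoc]
  rw [e, hU, Matrix.mul_one, diagonal_mul_diagonal]
  conv_rhs => rw [hs]
  refine congrArg (fun D : Fin d → ℂ => (h.1.eigenvectorUnitary : Matrix (Fin d) (Fin d) ℂ) *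
    diagonal D * (star h.1.eigenvectorUnitary : Matrix (Fin d) (Fin d) ℂ)) ?_
  funext i
  simp only [Function.comp_apply]
  rw [← Complex.ofReal_mul, Real.mul_self_sqrt (h.eigenvalues_nonneg i)]
  rfl

end Matrix.PosSemidef

lemma trace_re_nonneg {d : ℕ} {A : Matrix (Fin d) (Fin d) ℂ} (hA : A.PosSemidef) :
    0 ≤ A.trace.re := by
  rw [Matrix.trace, Complex.re_sum]
  refine Finset.sum_nonneg fun j _ => ?_
  have h := hA.dotProduct_mulVec_nonneg (Pi.single j 1)
  have he : star (Pi.single j 1 : Fin d → ℂ) ⬝ᵥ (A *ᵥ Pi.single j 1) = A j j := by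
    simp [dotProduct, Matrix.mulVec, Pi.single_apply, mul_ite]
  rw [he] at h
  exact (Complex.nonneg_iff.mp h).1

lemma trace_mul_re_nonneg {d : ℕ} {A B : Matrix (Fin d) (Fin d) ℂ}
    (hA : A.PosSemidef) (hB : B.PosSemidef) : 0 ≤ ((A * B).trace).re := by
  have h1 : A * B = hA.sqrt * (hA.sqrt * B) := by
    rw [← Matrix.mul_assoc, hA.sqrt_mul_self]
  rw [h1, Matrix.trace_mul_comm]
  have h2 : (hA.sqrt * B * hA.sqrt).PosSemidef := by
    have := hB.mul_mul_conjTranspose_same hA.sqrt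
    rwa [hA.posSemidef_sqrt.isHermitian.eq] at this
  exact trace_re_nonneg h2


section cdiag
variable {d : ℕ} {P : Matrix (Fin d) (Fin d) ℂ}

noncomputable def cdiag (hP : P.IsHermitian) (f : ℝ → ℝ) : Matrix (Fin d) (Fin d) ℂ :=
  (hP.eigenvectorUnitary : Matrix (Fin d) (Fin d) ℂ) *
    diagonal (RCLike.ofReal ∘ f ∘ hP.eigenvalues) *
    (star hP.eigenvectorUnitary : Matrix (Fin d) (Fin d) ℂ)

lemma cdiag_mul (hP : P.IsHermitian) (f g : ℝ → ℝ) :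
    cdiag hP f * cdiag hP g = cdiag hP (fun x => f x * g x) := by
  unfold cdiag
  have hU : (star hP.eigenvectorUnitary : Matrix (Fin d) (Fin d) ℂ) *
      (hP.eigenvectorUnitary : Matrix (Fin d) (Fin d) ℂ) = 1 :=
    mem_unitaryGroup_iff'.mp hP.eigenvectorUnitary.2
  have hcancel : ∀ Z : Matrix (Fin d) (Fin d) ℂ,
      (star hP.eigenvectorUnitary : Matrix (Fin d) (Fin d) ℂ) *
        ((hP.eigenvectorUnitary : Matrix (Fin d) (Fin d) ℂ) * Z) = Z := by
    intro Z; rw [← Matrix.mul_assoc, hU, Matrix.one_mul]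
  simp only [Matrix.mul_assoc]
  rw [hcancel]
  rw [← Matrix.mul_assoc (diagonal _) (diagonal _), diagonal_mul_diagonal]
  have hd : (fun i => (RCLike.ofReal ∘ f ∘ hP.eigenvalues) i * (RCLike.ofReal ∘ g ∘ hP.eigenvalues) i)
      = (RCLike.ofReal ∘ (fun x => f x * g x) ∘ hP.eigenvalues : Fin d → ℂ) := by
    funext i; simp
  rw [hd]

lemma cdiag_id (hP : P.IsHermitian) : cdiag hP (fun x => x) = P := by
  have h := hP.spectral_theorem
  rw [Unitary.conjStarAlgAut_apply] at h
  unfold cdiag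
  conv_rhs => rw [h]
  rfl

lemma cdiag_psd (hP : P.IsHermitian) (f : ℝ → ℝ) (hf : ∀ i, 0 ≤ f (hP.eigenvalues i)) :
    (cdiag hP f).PosSemidef := by
  have h1 : (diagonal (RCLike.ofReal ∘ f ∘ hP.eigenvalues) : Matrix (Fin d) (Fin d) ℂ).PosSemidef :=
    posSemidef_diagonal_iff.mpr fun i => by
      simpa using (by exact_mod_cast hf i : (0:ℂ) ≤ ↑(f (hP.eigenvalues i)))
  have h2 := h1.mul_mul_conjTranspose_same (hP.eigenvectorUnitary : Matrix (Fin d) (Fin d) ℂ)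
  rw [← Matrix.star_eq_conjTranspose] at h2
  exact h2

lemma cdiag_sub (hP : P.IsHermitian) (f g : ℝ → ℝ) :
    cdiag hP f - cdiag hP g = cdiag hP (fun x => f x - g x) := by
  unfold cdiag
  rw [← Matrix.sub_mul, ← Matrix.mul_sub, diagonal_sub]
  have hd : (fun i => (RCLike.ofReal ∘ f ∘ hP.eigenvalues) i - (RCLike.ofReal ∘ g ∘ hP.eigenvalues) i)
      = (RCLike.ofReal ∘ (fun x => f x - g x) ∘ hP.eigenvalues : Fin d → ℂ) := by
    funext i; simp
  rw [hd]

lemma cdiag_one (hP : P.IsHermitian) : cdiag hP (fun _ => 1) = 1 := by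
  unfold cdiag
  have hfun : (RCLike.ofReal ∘ (fun _ => (1:ℝ)) ∘ hP.eigenvalues : Fin d → ℂ) = fun _ => 1 := by
    funext i; simp
  rw [hfun, diagonal_one, Matrix.mul_one]
  exact mem_unitaryGroup_iff.mp hP.eigenvectorUnitary.2

end cdiag



lemma trace_conjTranspose_mul_self_re {d : ℕ} (X : Matrix (Fin d) (Fin d) ℂ) :
    (Xᴴ * X).trace.re = ∑ p : Fin d × Fin d, ‖X p.1 p.2‖ ^ 2 := by
  have h : ∀ j, ((Xᴴ * X) j j).re = ∑ i, ‖X i j‖ ^ 2 := by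
    intro j
    rw [Matrix.mul_apply, Complex.re_sum]
    congr 1; funext i
    simp [conjTranspose_apply, ← Complex.normSq_eq_conj_mul_self, Complex.normSq_eq_norm_sq,
      ← Complex.ofReal_pow]
  simp only [Matrix.trace, Matrix.diag, Complex.re_sum, h, Fintype.sum_prod_type]
  exact Finset.sum_comm ..

lemma frobenius_cs {d : ℕ} (X Y : Matrix (Fin d) (Fin d) ℂ) :
    ((Xᴴ * Y).trace).re ≤
      Real.sqrt ((Xᴴ * X).trace.re) * Real.sqrt ((Yᴴ * Y).trace.re) := by
  rw [trace_conjTranspose_mul_self_re X, trace_conjTranspose_mul_self_re Y]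
  have h1 : ((Xᴴ * Y).trace).re
      = ∑ p : Fin d × Fin d, ((starRingEnd ℂ) (X p.1 p.2) * Y p.1 p.2).re := by
    have h : ∀ j, ((Xᴴ * Y) j j).re = ∑ i, ((starRingEnd ℂ) (X i j) * Y i j).re := by
      intro j
      rw [Matrix.mul_apply, Complex.re_sum]
      simp [conjTranspose_apply]
    simp only [Matrix.trace, Matrix.diag, Complex.re_sum, h, Fintype.sum_prod_type]
    exact Finset.sum_comm ..
  rw [h1]
  calc ∑ p : Fin d × Fin d, ((starRingEnd ℂ) (X p.1 p.2) * Y p.1 p.2).re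
      ≤ ∑ p : Fin d × Fin d, ‖X p.1 p.2‖ * ‖Y p.1 p.2‖ := by
        refine Finset.sum_le_sum fun p _ => ?_
        calc ((starRingEnd ℂ) (X p.1 p.2) * Y p.1 p.2).re
            ≤ ‖(starRingEnd ℂ) (X p.1 p.2) * Y p.1 p.2‖ := Complex.re_le_norm _
          _ = ‖X p.1 p.2‖ * ‖Y p.1 p.2‖ := by
              rw [norm_mul, Complex.norm_conj]
    _ ≤ _ := by
        have h2 := sum_abs_mul_le (fun p : Fin d × Fin d => X p.1 p.2) (fun p => Y p.1 p.2)
        exact h2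


lemma fidelity_le_measured {d k : ℕ} (ρ σ : Matrix (Fin d) (Fin d) ℂ)
    (hρ : ρ.PosSemidef) (hσ : σ.PosSemidef)
    (M : Fin k → Matrix (Fin d) (Fin d) ℂ) (hM : ∀ i, (M i).PosSemidef)
    (hMsum : ∑ i, M i = 1) :
    fidelity ρ σ ≤ ∑ i, Real.sqrt ((ρ * M i).trace.re) * Real.sqrt ((σ * M i).trace.re) := by
  have hsρH : hρ.sqrtᴴ = hρ.sqrt := hρ.posSemidef_sqrt.isHermitian
  have hsσH : hσ.sqrtᴴ = hσ.sqrt := hσ.posSemidef_sqrt.isHermitian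
  have hB : (hρ.sqrt * σ * hρ.sqrt).PosSemidef := by
    have h := hσ.mul_mul_conjTranspose_same hρ.sqrt
    rwa [hsρH] at h
  have hfid : fidelity ρ σ = hB.sqrt.trace.re := by
    unfold fidelity
    rw [show psqrt ρ = hρ.sqrt from dif_pos hρ,
      show psqrt (hρ.sqrt * σ * hρ.sqrt) = hB.sqrt from dif_pos hB]
  set P := hB.sqrt with hPdef
  have hP : P.PosSemidef := hB.posSemidef_sqrt
  have hid : cdiag hP.1 (fun x => x) = P := cdiag_id hP.1
  have hpinvPSD : (cdiag hP.1 (fun x => x⁻¹)).PosSemidef :=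
    cdiag_psd hP.1 _ (fun i => inv_nonneg.mpr (hP.eigenvalues_nonneg i))
  have hfun : (fun x : ℝ => x⁻¹ * x * x) = fun x : ℝ => x := by
    funext x
    by_cases hx : x = 0
    · simp [hx]
    · field_simp
  have F2' : cdiag hP.1 (fun x => x⁻¹) * cdiag hP.1 (fun x => x) * cdiag hP.1 (fun x => x)
      = cdiag hP.1 (fun x => x) := by
    simp only [cdiag_mul]
    rw [hfun]
  have F2 : cdiag hP.1 (fun x => x⁻¹) * P * P = P := by
    rw [hid] at F2'
    exact F2'
  set pinv := cdiag hP.1 (fun x => x⁻¹) with hpinv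
  set V := hσ.sqrt * hρ.sqrt * pinv with hV
  have hVstar : Vᴴ = pinv * (hρ.sqrt * hσ.sqrt) := by
    rw [hV, conjTranspose_mul, conjTranspose_mul, hsρH, hsσH, hpinvPSD.isHermitian.eq]
  have hAA : hρ.sqrt * hσ.sqrt * (hσ.sqrt * hρ.sqrt) = hρ.sqrt * σ * hρ.sqrt := by
    have h : hσ.sqrt * (hσ.sqrt * hρ.sqrt) = σ * hρ.sqrt := by
      rw [← Matrix.mul_assoc, hσ.sqrt_mul_self]
    rw [Matrix.mul_assoc, h, ← Matrix.mul_assoc]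
  have hPP : P * P = hρ.sqrt * σ * hρ.sqrt := hB.sqrt_mul_self
  have key1 : Vᴴ * (hσ.sqrt * hρ.sqrt) = P := by
    rw [hVstar, Matrix.mul_assoc, hAA, ← hPP, ← Matrix.mul_assoc, F2]
  have hVVc : (1 - V * Vᴴ).PosSemidef := by
    apply contraction_flip
    have hVV' : cdiag hP.1 (fun x => x⁻¹) * (cdiag hP.1 (fun x => x) * cdiag hP.1 (fun x => x) *
        cdiag hP.1 (fun x => x⁻¹)) = cdiag hP.1 (fun x => x⁻¹ * x * x * x⁻¹) := by
      simp only [cdiag_mul]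
      have hg : (fun x : ℝ => x⁻¹ * (x * x * x⁻¹)) = fun x : ℝ => x⁻¹ * x * x * x⁻¹ := by
        funext x; ring
      rw [hg]
    rw [hid] at hVV'
    have hVV : Vᴴ * V = cdiag hP.1 (fun x => x⁻¹ * x * x * x⁻¹) := by
      rw [hVstar, hV, Matrix.mul_assoc pinv, ← Matrix.mul_assoc (hρ.sqrt * hσ.sqrt), hAA, ← hPP]
      rw [hpinv]
      exact hVV'
    rw [hVV]
    have hsub : (1 : Matrix (Fin d) (Fin d) ℂ) - cdiag hP.1 (fun x => x⁻¹ * x * x * x⁻¹)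
        = cdiag hP.1 (fun x => 1 - x⁻¹ * x * x * x⁻¹) := by
      rw [← cdiag_one hP.1, cdiag_sub]
    rw [hsub]
    refine cdiag_psd hP.1 _ (fun i => ?_)
    by_cases hx : hP.1.eigenvalues i = 0
    · simp [hx]
    · field_simp; norm_num
  have hsum : hσ.sqrt * hρ.sqrt = ∑ i, hσ.sqrt * M i * hρ.sqrt := by
    have h1 : (∑ i, hσ.sqrt * M i * hρ.sqrt) = hσ.sqrt * (∑ i, M i) * hρ.sqrt := by
      rw [Finset.mul_sum, Finset.sum_mul]
    rw [h1, hMsum, Matrix.mul_one]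
  have main : fidelity ρ σ = ∑ i, ((Vᴴ * (hσ.sqrt * M i * hρ.sqrt)).trace).re := by
    rw [hfid, ← key1, hsum, Finset.mul_sum, trace_sum, Complex.re_sum]
  rw [main]
  refine Finset.sum_le_sum fun i _ => ?_
  -- per-term bound
  have hsH : (hM i).sqrtᴴ = (hM i).sqrt := (hM i).posSemidef_sqrt.isHermitian
  have hXY : ((hM i).sqrt * hσ.sqrt * V)ᴴ * ((hM i).sqrt * hρ.sqrt)
      = Vᴴ * (hσ.sqrt * M i * hρ.sqrt) := by
    have h3 : ∀ Z : Matrix (Fin d) (Fin d) ℂ, (hM i).sqrt * ((hM i).sqrt * Z) = M i * Z :=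
      fun Z => by rw [← Matrix.mul_assoc, (hM i).sqrt_mul_self]
    simp only [conjTranspose_mul, hsH, hsσH, Matrix.mul_assoc, h3]
  have hcs := frobenius_cs ((hM i).sqrt * hσ.sqrt * V) ((hM i).sqrt * hρ.sqrt)
  rw [hXY] at hcs
  have hY : (((hM i).sqrt * hρ.sqrt)ᴴ * ((hM i).sqrt * hρ.sqrt)).trace = (ρ * M i).trace := by
    have h3 : ∀ Z : Matrix (Fin d) (Fin d) ℂ, (hM i).sqrt * ((hM i).sqrt * Z) = M i * Z :=
      fun Z => by rw [← Matrix.mul_assoc, (hM i).sqrt_mul_self]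
    simp only [conjTranspose_mul, hsH, hsρH, Matrix.mul_assoc, h3]
    rw [← Matrix.mul_assoc, trace_mul_cycle, hρ.sqrt_mul_self]
  have hC : (hσ.sqrt * M i * hσ.sqrt).PosSemidef := by
    have h := (hM i).mul_mul_conjTranspose_same hσ.sqrt
    rwa [hsσH] at h
  have hX : ((((hM i).sqrt * hσ.sqrt * V)ᴴ * ((hM i).sqrt * hσ.sqrt * V)).trace).re
      ≤ (σ * M i).trace.re := by
    have e2 : ((hM i).sqrt * hσ.sqrt * V)ᴴ * ((hM i).sqrt * hσ.sqrt * V)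
        = Vᴴ * (hσ.sqrt * M i * hσ.sqrt * V) := by
      have h3 : ∀ Z : Matrix (Fin d) (Fin d) ℂ, (hM i).sqrt * ((hM i).sqrt * Z) = M i * Z :=
        fun Z => by rw [← Matrix.mul_assoc, (hM i).sqrt_mul_self]
      simp only [conjTranspose_mul, hsH, hsσH, Matrix.mul_assoc, h3]
    rw [e2]
    have e3 : (Vᴴ * (hσ.sqrt * M i * hσ.sqrt * V)).trace
        = ((hσ.sqrt * M i * hσ.sqrt) * (V * Vᴴ)).trace := by
      rw [trace_mul_comm, Matrix.mul_assoc]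
    rw [e3]
    have h4 : 0 ≤ (((hσ.sqrt * M i * hσ.sqrt) * (1 - V * Vᴴ)).trace).re :=
      trace_mul_re_nonneg hC hVVc
    rw [Matrix.mul_sub, Matrix.mul_one, trace_sub, Complex.sub_re, sub_nonneg] at h4
    refine h4.trans (le_of_eq ?_)
    rw [trace_mul_cycle, hσ.sqrt_mul_self]
  calc ((Vᴴ * (hσ.sqrt * M i * hρ.sqrt)).trace).re
      ≤ Real.sqrt (((((hM i).sqrt * hσ.sqrt * V)ᴴ * ((hM i).sqrt * hσ.sqrt * V)).trace).re)
        * Real.sqrt (((((hM i).sqrt * hρ.sqrt)ᴴ * ((hM i).sqrt * hρ.sqrt)).trace).re) := hcs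
    _ ≤ Real.sqrt ((σ * M i).trace.re) * Real.sqrt ((ρ * M i).trace.re) := by
        apply mul_le_mul (Real.sqrt_le_sqrt hX) (le_of_eq (by rw [hY])) (Real.sqrt_nonneg _)
          (Real.sqrt_nonneg _)
    _ = Real.sqrt ((ρ * M i).trace.re) * Real.sqrt ((σ * M i).trace.re) := mul_comm _ _

/-- Theorem 2: a necessary condition for single state conclusive exclusion. -/
theorem fidelity_sum_le_of_conclusive_exclusion
    {d k : ℕ} (hk : 2 ≤ k) (ρ : Fin k → Matrix (Fin d) (Fin d) ℂ)
    (hρ : ∀ i, (ρ i).PosSemidef) (hρtr : ∀ i, (ρ i).trace = 1)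
    (M : Fin k → Matrix (Fin d) (Fin d) ℂ)
    (hM : ∀ i, (M i).PosSemidef) (hMsum : ∑ i, M i = 1)
    (hexcl : ∀ i, (ρ i * M i).trace = 0) :
    ∑ j, ∑ l ∈ Finset.univ \ {j}, fidelity (ρ j) (ρ l) ≤ (k : ℝ) * ((k : ℝ) - 2) := by
  have hk2 : (2:ℝ) ≤ (k:ℝ) := by exact_mod_cast hk
  have hp0 : ∀ j i : Fin k, 0 ≤ ((ρ j * M i).trace).re :=
    fun j i => trace_mul_re_nonneg (hρ j) (hM i)
  have hpd : ∀ i : Fin k, ((ρ i * M i).trace).re = 0 := fun i => by rw [hexcl i]; simp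
  have hps : ∀ j, ∑ i, ((ρ j * M i).trace).re = 1 := by
    intro j
    rw [← Complex.re_sum, ← trace_sum]
    have h1 : ∑ i, ρ j * M i = ρ j := by rw [← Finset.mul_sum, hMsum, Matrix.mul_one]
    rw [h1, hρtr j, Complex.one_re]
  have hfidb : ∀ j l, fidelity (ρ j) (ρ l) ≤
      ∑ i, Real.sqrt ((ρ j * M i).trace).re * Real.sqrt ((ρ l * M i).trace).re :=
    fun j l => fidelity_le_measured (ρ j) (ρ l) (hρ j) (hρ l) M hM hMsum
  have hib : ∀ i, ∑ j, ∑ l ∈ Finset.univ \ {j},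
      Real.sqrt ((ρ j * M i).trace).re * Real.sqrt ((ρ l * M i).trace).re
      ≤ ((k:ℝ) - 2) * ∑ j, ((ρ j * M i).trace).re := by
    intro i
    set a : Fin k → ℝ := fun j => Real.sqrt ((ρ j * M i).trace).re with ha
    have hsq : ∀ j, a j ^ 2 = ((ρ j * M i).trace).re := fun j => Real.sq_sqrt (hp0 j i)
    have hident : ∑ j, ∑ l ∈ Finset.univ \ {j}, a j * a l
        = (∑ j, a j) ^ 2 - ∑ j, a j ^ 2 := by
      have h1 : ∀ j, ∑ l ∈ Finset.univ \ {j}, a j * a l = a j * (∑ l, a l) - a j * a j := by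
        intro j
        rw [← Finset.mul_sum]
        have h2 : ∑ l ∈ Finset.univ \ {j}, a l = (∑ l, a l) - a j := by
          have h3 := Finset.sum_sdiff (f := a) (Finset.subset_univ ({j} : Finset (Fin k)))
          rw [Finset.sum_singleton] at h3
          linarith
        rw [h2, mul_sub]
      calc ∑ j, ∑ l ∈ Finset.univ \ {j}, a j * a l
          = ∑ j, (a j * (∑ l, a l) - a j * a j) := Finset.sum_congr rfl fun j _ => h1 j
        _ = (∑ j, a j) * (∑ l, a l) - ∑ j, a j * a j := by
            rw [Finset.sum_sub_distrib, ← Finset.sum_mul]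
        _ = (∑ j, a j) ^ 2 - ∑ j, a j ^ 2 := by simp only [sq]
    have hai : a i = 0 := by
      simp only [ha]
      rw [hpd i, Real.sqrt_zero]
    have hS : ∑ j, a j = ∑ j ∈ Finset.univ \ {i}, a j := by
      have h3 := Finset.sum_sdiff (f := a) (Finset.subset_univ ({i} : Finset (Fin k)))
      rw [Finset.sum_singleton] at h3
      rw [hai] at h3
      linarith
    have hCS : (∑ j ∈ Finset.univ \ {i}, a j) ^ 2
        ≤ ((k:ℝ) - 1) * ∑ j ∈ Finset.univ \ {i}, a j ^ 2 := by
      have h4 := sq_sum_le_card_mul_sum_sq (s := Finset.univ \ {i}) (f := a)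
      have hcard : (((Finset.univ \ {i} : Finset (Fin k)).card : ℝ)) = (k:ℝ) - 1 := by
        rw [Finset.card_sdiff_of_subset (Finset.subset_univ _), Finset.card_singleton, Finset.card_univ,
          Fintype.card_fin]
        have h5 : 1 ≤ k := le_trans one_le_two hk
        push_cast [Nat.cast_sub h5]
        ring
      rw [hcard] at h4
      exact h4
    have hsub2 : ∑ j ∈ Finset.univ \ {i}, a j ^ 2 ≤ ∑ j, a j ^ 2 :=
      Finset.sum_le_sum_of_subset_of_nonneg (Finset.subset_univ _) fun j _ _ => sq_nonneg _
    have hT : ∑ j, a j ^ 2 = ∑ j, ((ρ j * M i).trace).re :=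
      Finset.sum_congr rfl fun j _ => hsq j
    have hstep : (∑ j, a j) ^ 2 ≤ ((k:ℝ) - 1) * ∑ j, a j ^ 2 := by
      rw [hS]
      refine hCS.trans ?_
      have : (0:ℝ) ≤ (k:ℝ) - 1 := by linarith
      exact mul_le_mul_of_nonneg_left hsub2 this
    calc ∑ j, ∑ l ∈ Finset.univ \ {j},
        Real.sqrt ((ρ j * M i).trace).re * Real.sqrt ((ρ l * M i).trace).re
        = (∑ j, a j) ^ 2 - ∑ j, a j ^ 2 := hident
      _ ≤ ((k:ℝ) - 1) * (∑ j, a j ^ 2) - ∑ j, a j ^ 2 := by linarith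
      _ = ((k:ℝ) - 2) * ∑ j, a j ^ 2 := by ring
      _ = ((k:ℝ) - 2) * ∑ j, ((ρ j * M i).trace).re := by rw [hT]
  calc ∑ j, ∑ l ∈ Finset.univ \ {j}, fidelity (ρ j) (ρ l)
      ≤ ∑ j, ∑ l ∈ Finset.univ \ {j}, ∑ i,
          Real.sqrt ((ρ j * M i).trace).re * Real.sqrt ((ρ l * M i).trace).re :=
        Finset.sum_le_sum fun j _ => Finset.sum_le_sum fun l _ => hfidb j l
    _ = ∑ j, ∑ i, ∑ l ∈ Finset.univ \ {j},
          Real.sqrt ((ρ j * M i).trace).re * Real.sqrt ((ρ l * M i).trace).re :=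
        Finset.sum_congr rfl fun j _ => Finset.sum_comm ..
    _ = ∑ i, ∑ j, ∑ l ∈ Finset.univ \ {j},
          Real.sqrt ((ρ j * M i).trace).re * Real.sqrt ((ρ l * M i).trace).re :=
        Finset.sum_comm ..
    _ ≤ ∑ i, ((k:ℝ) - 2) * ∑ j, ((ρ j * M i).trace).re :=
        Finset.sum_le_sum fun i _ => hib i
    _ = ((k:ℝ) - 2) * ∑ i, ∑ j, ((ρ j * M i).trace).re := by rw [← Finset.mul_sum]
    _ = ((k:ℝ) - 2) * ∑ j, ∑ i, ((ρ j * M i).trace).re := by rw [Finset.sum_comm]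
    _ = ((k:ℝ) - 2) * (k:ℝ) := by
        rw [Finset.sum_congr rfl fun j _ => hps j]
        simp
    _ = (k : ℝ) * ((k : ℝ) - 2) := mul_comm _ _
end

section
/- Let k ≥ 3 and define unit vectors in ℂ^k by |ψ_i⟩ = (1/√(k−1)) ∑_{j≠i} |j⟩ for i = 1,…,k, where {|j⟩}_{j=1}^k is the standard orthonormal basis. Then (a) the projective measurement in the basis {|i⟩}_{i=1}^k conclusively excludes the set: ⟨i|ψ_i⟩ = 0 for every i; and (b) ∑_{j≠l, j,l=1}^{k} |⟨ψ_j|ψ_l⟩| = k(k−2), so the necessary fidelity condition ∑_{j≠l} F(|ψ_j⟩⟨ψ_j|, |ψ_l⟩⟨ψ_l|) ≤ k(k−2) is attained with equality. -/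
open BigOperators

/-- The states `|ψᵢ⟩ = (1/√(k-1)) ∑_{j≠i} |j⟩` are conclusively excluded by the
measurement in the standard basis, and they attain the necessary fidelity
condition `∑_{j≠l} |⟨ψⱼ|ψₗ⟩| = k(k-2)` with equality. -/
theorem cusp_states_exclusion_and_fidelity_sum
    {k : ℕ} (hk : 3 ≤ k) (ψ : Fin k → Fin k → ℂ)
    (hψ : ∀ i j, ψ i j = if j = i then 0 else ((1 / Real.sqrt ((k : ℝ) - 1) : ℝ) : ℂ)) :
    (∀ i, ψ i i = 0) ∧
    ∑ j, ∑ l ∈ Finset.univ \ {j},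
        ‖∑ m, (starRingEnd ℂ) (ψ j m) * ψ l m‖ = (k : ℝ) * ((k : ℝ) - 2) := by
  have hk3 : (3 : ℝ) ≤ (k : ℝ) := by exact_mod_cast hk
  have hpos : (0 : ℝ) < (k : ℝ) - 1 := by linarith
  set c : ℝ := 1 / Real.sqrt ((k : ℝ) - 1) with hc
  have hc2 : c * c = 1 / ((k : ℝ) - 1) := by
    rw [hc, div_mul_div_comm, one_mul, Real.mul_self_sqrt (le_of_lt hpos)]
  constructor
  · intro i; rw [hψ]; simp
  · have hinner : ∀ j l : Fin k, j ≠ l →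
        (∑ m, (starRingEnd ℂ) (ψ j m) * ψ l m) = ((((k : ℝ) - 2) / ((k : ℝ) - 1) : ℝ) : ℂ) := by
      intro j l hjl
      have heq : ∀ m : Fin k, (starRingEnd ℂ) (ψ j m) * ψ l m =
          if m = j ∨ m = l then 0 else ((c * c : ℝ) : ℂ) := by
        intro m
        rw [hψ, hψ]
        by_cases h1 : m = j <;> by_cases h2 : m = l <;> simp [h1, h2]
      rw [Finset.sum_congr rfl (fun m _ => heq m), Finset.sum_ite,
        Finset.sum_const_zero, zero_add, Finset.sum_const]
      have hfilter : Finset.filter (fun m => ¬(m = j ∨ m = l)) Finset.univ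
          = Finset.univ \ {j, l} := by
        ext m; simp [not_or]
      have hcard : (Finset.filter (fun m => ¬(m = j ∨ m = l)) Finset.univ).card = k - 2 := by
        rw [hfilter, Finset.card_sdiff_of_subset (Finset.subset_univ _)]
        simp [Finset.card_insert_of_notMem, hjl]
      rw [hcard, nsmul_eq_mul, hc2]
      have h2 : 2 ≤ k := by omega
      push_cast [Nat.cast_sub h2]
      ring
    have habs : ∀ j l : Fin k, j ≠ l →
        ‖∑ m, (starRingEnd ℂ) (ψ j m) * ψ l m‖
          = ((k : ℝ) - 2) / ((k : ℝ) - 1) := by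
      intro j l hjl
      rw [hinner j l hjl, Complex.norm_real, Real.norm_of_nonneg]
      apply div_nonneg <;> linarith
    have hstep : ∀ j : Fin k, ∑ l ∈ Finset.univ \ {j},
        ‖∑ m, (starRingEnd ℂ) (ψ j m) * ψ l m‖
          = ((k : ℝ) - 1) * (((k : ℝ) - 2) / ((k : ℝ) - 1)) := by
      intro j
      rw [Finset.sum_congr rfl (fun l hl => habs j l (by
        simp only [Finset.mem_sdiff, Finset.mem_singleton] at hl
        exact fun h => hl.2 (h ▸ rfl)))]
      rw [Finset.sum_const, nsmul_eq_mul]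
      congr 1
      rw [Finset.card_sdiff_of_subset (Finset.subset_univ _)]
      simp only [Finset.card_univ, Fintype.card_fin, Finset.card_singleton]
      have : 1 ≤ k := by omega
      push_cast [Nat.cast_sub this]; ring
    rw [Finset.sum_congr rfl (fun j _ => hstep j), Finset.sum_const, nsmul_eq_mul]
    simp only [Finset.card_univ, Fintype.card_fin]
    field_simp
end

section
/- Let n ≥ 1 and 0 ≤ θ < π. For x ∈ {0,1}^n define Ψ_x ∈ ℂ^{2^n} by Ψ_x(r) = (−1)^{x·r} cos(θ/2)^{n−|r|} sin(θ/2)^{|r|} for r ∈ {0,1}^n, where |r| is the Hamming weight of r, and define ζ_x ∈ ℂ^{2^n} by ζ_x(0⃗) = 1/√(2^n) and ζ_x(r) = −(−1)^{x·r}/√(2^n) for r ≠ 0⃗. Then for every x ∈ {0,1}^n, ⟨Ψ_x|ζ_x⟩ = (1/√(2^n)) cos(θ/2)^n (2 − (1 + tan(θ/2))^n). -/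
open BigOperators

/-- The dot product `x·r = ∑ᵢ xᵢ rᵢ` of two bit strings. -/
def bdot {n : ℕ} (x r : Fin n → Bool) : ℕ :=
  ∑ i, if x i ∧ r i then 1 else 0

/-- The Hamming weight `|r| = ∑ᵢ rᵢ` of a bit string. -/
def hamming {n : ℕ} (r : Fin n → Bool) : ℕ :=
  ∑ i, if r i then 1 else 0

lemma prod_ite_eq_pow {n : ℕ} (c s : ℝ) (r : Fin n → Bool) :
    ∏ i, (if r i then s else c) = c ^ (n - hamming r) * s ^ hamming r := by
  classical
  have hh : hamming r = (Finset.univ.filter (fun i => r i = true)).card := by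
    unfold hamming
    rw [Finset.card_filter]
  rw [Finset.prod_ite, Finset.prod_const, Finset.prod_const, hh]
  have hcard : (Finset.univ.filter (fun i => ¬ r i = true)).card =
      n - (Finset.univ.filter (fun i => r i = true)).card := by
    have h := Finset.card_filter_add_card_filter_not
      (s := (Finset.univ : Finset (Fin n))) (p := fun i => r i = true)
    simp only [Finset.card_univ, Fintype.card_fin] at h
    omega
  rw [hcard]; ring

lemma sum_pow_weights {n : ℕ} (c s : ℝ) :
    ∑ r : Fin n → Bool, c ^ (n - hamming r) * s ^ hamming r = (c + s) ^ n := by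
  classical
  calc ∑ r : Fin n → Bool, c ^ (n - hamming r) * s ^ hamming r
      = ∑ r : Fin n → Bool, ∏ i, (if r i then s else c) := by
        refine Finset.sum_congr rfl fun r _ => (prod_ite_eq_pow c s r).symm
    _ = ∏ _i : Fin n, ∑ b : Bool, (if b then s else c) :=
        (Fintype.prod_sum (ι := Fin n) (κ := fun _ => Bool)
          (f := fun _ b => if b then s else c)).symm
    _ = (c + s) ^ n := by
        simp [Fintype.sum_bool, Finset.prod_const, add_comm]

/-- The overlap of the PBR state `Ψₓ` with the measurement vector `ζₓ`:
`⟨Ψₓ|ζₓ⟩ = (1/√(2^n)) cos(θ/2)^n (2 - (1 + tan(θ/2))^n)`. -/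
theorem pbr_overlap
    {n : ℕ} (hn : 1 ≤ n) (θ : ℝ) (hθ0 : 0 ≤ θ) (hθ1 : θ < Real.pi)
    (Ψ ζ : (Fin n → Bool) → (Fin n → Bool) → ℂ)
    (hΨ : ∀ x r, Ψ x r = (-1 : ℂ) ^ bdot x r *
      ((Real.cos (θ / 2) ^ (n - hamming r) * Real.sin (θ / 2) ^ hamming r : ℝ) : ℂ))
    (hζ : ∀ x r, ζ x r =
      if r = (fun _ => false) then ((1 / Real.sqrt (2 ^ n) : ℝ) : ℂ)
      else -(-1 : ℂ) ^ bdot x r * ((1 / Real.sqrt (2 ^ n) : ℝ) : ℂ)) :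
    ∀ x : Fin n → Bool,
      ∑ r, (starRingEnd ℂ) (Ψ x r) * ζ x r =
        (((1 / Real.sqrt (2 ^ n)) * Real.cos (θ / 2) ^ n *
          (2 - (1 + Real.tan (θ / 2)) ^ n) : ℝ) : ℂ) := by
  classical
  intro x
  set c := Real.cos (θ / 2) with hc
  set s := Real.sin (θ / 2) with hs
  set q : ℝ := 1 / Real.sqrt (2 ^ n) with hq
  have hcpos : 0 < c := by
    apply Real.cos_pos_of_mem_Ioo
    constructor <;> [linarith [Real.pi_pos]; linarith]
  have hterm : ∀ r, (starRingEnd ℂ) (Ψ x r) * ζ x r =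
      (((if r = (fun _ => false) then 2 * c ^ n else 0)
        - c ^ (n - hamming r) * s ^ hamming r) * q : ℝ) := by
    intro r
    have hsq : (-1 : ℂ) ^ bdot x r * (-1 : ℂ) ^ bdot x r = 1 := by
      rw [← pow_add]
      exact Even.neg_one_pow ⟨bdot x r, rfl⟩
    rw [hΨ, hζ, map_mul, map_pow, map_neg, map_one, Complex.conj_ofReal]
    by_cases h : r = (fun _ => false)
    · subst h
      have hb : bdot x (fun _ => false) = 0 := by simp [bdot]
      have hham : hamming (fun _ : Fin n => false) = 0 := by simp [hamming]
      rw [hb, hham, if_pos rfl, if_pos rfl, Nat.sub_zero]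
      push_cast
      ring
    · rw [if_neg h, if_neg h]
      have key : (-1 : ℂ) ^ bdot x r * ((c ^ (n - hamming r) * s ^ hamming r : ℝ) : ℂ) *
          (-(-1 : ℂ) ^ bdot x r * ((q : ℝ) : ℂ)) =
          -((-1 : ℂ) ^ bdot x r * (-1 : ℂ) ^ bdot x r) *
            ((c ^ (n - hamming r) * s ^ hamming r : ℝ) : ℂ) * ((q : ℝ) : ℂ) := by
        ring
      rw [key, hsq]
      push_cast
      ring
  rw [Finset.sum_congr rfl fun r _ => hterm r, ← Complex.ofReal_sum]
  congr 1
  rw [← Finset.sum_mul, Finset.sum_sub_distrib]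
  have h1 : ∑ r : Fin n → Bool, (if r = (fun _ => false) then 2 * c ^ n else 0)
      = 2 * c ^ n := by
    rw [Finset.sum_ite_eq' Finset.univ]
    simp
  have h2 : ∑ r : Fin n → Bool, c ^ (n - hamming r) * s ^ hamming r = (c + s) ^ n :=
    sum_pow_weights c s
  rw [h1, h2]
  have htan : Real.tan (θ / 2) = s / c := Real.tan_eq_sin_div_cos _
  have hcs : (c + s) ^ n = c ^ n * (1 + Real.tan (θ / 2)) ^ n := by
    rw [htan, ← mul_pow]
    congr 1
    field_simp
  rw [hcs]
  ring
end

section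
/- Let n ≥ 1 and 0 ≤ θ < π. With Ψ_x, ζ_x ∈ ℂ^{2^n} as defined by Ψ_x(r) = (−1)^{x·r} cos(θ/2)^{n−|r|} sin(θ/2)^{|r|} and ζ_x(0⃗) = 1/√(2^n), ζ_x(r) = −(−1)^{x·r}/√(2^n) for r ≠ 0⃗, the matrix N = ∑_{x∈{0,1}^n} 2^{−n} |Ψ_x⟩⟨Ψ_x|ζ_x⟩⟨ζ_x| is the diagonal matrix C(θ)·(E_{0⃗,0⃗} − ∑_{r≠0⃗} tan(θ/2)^{|r|} E_{r,r}), where C(θ) = 2^{−n} cos(θ/2)^{2n} (2 − (1 + tan(θ/2))^n) and E_{r,r} is the diagonal matrix unit at index r. In particular, tr(N) = 2^{−n} cos(θ/2)^{2n} (2 − (1 + tan(θ/2))^n)². -/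
open BigOperators Matrix

lemma sum_prod_bool {n : ℕ} {M : Type*} [CommSemiring M] (g : Fin n → Bool → M) :
    ∑ x : Fin n → Bool, ∏ i, g i (x i) = ∏ i, (g i true + g i false) := by
  rw [← Fintype.prod_sum g]
  simp

lemma sign_prod {n : ℕ} (x p : Fin n → Bool) :
    ((-1 : ℂ)) ^ bdot x p = ∏ i, (-1 : ℂ) ^ (if x i ∧ p i then 1 else 0) := by
  rw [bdot, Finset.prod_pow_eq_pow_sum]

lemma sum_sign {n : ℕ} (p q : Fin n → Bool) :
    ∑ x : Fin n → Bool, (-1 : ℂ) ^ bdot x p * (-1 : ℂ) ^ bdot x q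
      = if p = q then (2 : ℂ) ^ n else 0 := by
  have h1 : ∀ x : Fin n → Bool, (-1 : ℂ) ^ bdot x p * (-1 : ℂ) ^ bdot x q
      = ∏ i, ((-1 : ℂ) ^ (if x i ∧ p i then 1 else 0) * (-1 : ℂ) ^ (if x i ∧ q i then 1 else 0)) := by
    intro x
    rw [sign_prod x p, sign_prod x q, Finset.prod_mul_distrib]
  simp only [h1]
  rw [sum_prod_bool (fun i b => ((-1 : ℂ) ^ (if b ∧ p i then 1 else 0) * (-1 : ℂ) ^ (if b ∧ q i then 1 else 0)))]
  by_cases h : p = q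
  · subst h
    rw [if_pos rfl]
    have h2 : ∀ i : Fin n,
        (((-1:ℂ) ^ (if true ∧ p i then 1 else 0) * (-1:ℂ) ^ (if true ∧ p i then 1 else 0)) +
          ((-1:ℂ) ^ (if false ∧ p i then 1 else 0) * (-1:ℂ) ^ (if false ∧ p i then 1 else 0))) = 2 := by
      intro i; cases hp : p i <;> norm_num
    rw [Finset.prod_congr rfl fun i _ => h2 i, Finset.prod_const, Finset.card_univ,
      Fintype.card_fin]
  · rw [if_neg h]
    obtain ⟨i, hi⟩ := Function.ne_iff.mp h
    refine Finset.prod_eq_zero (Finset.mem_univ i) ?_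
    cases hp : p i <;> cases hq : q i <;> simp_all

lemma hamming_eq_card {n : ℕ} (r : Fin n → Bool) :
    hamming r = (Finset.univ.filter fun i => r i = true).card := by
  rw [hamming, Finset.card_filter]

lemma hamming_le {n : ℕ} (r : Fin n → Bool) : hamming r ≤ n := by
  rw [hamming_eq_card]
  simpa using Finset.card_filter_le Finset.univ (fun i => r i = true)

lemma prod_ite_weight {n : ℕ} {M : Type*} [CommMonoid M] (a b : M) (r : Fin n → Bool) :
    ∏ i, (if r i then b else a) = a ^ (n - hamming r) * b ^ hamming r := by
  rw [Finset.prod_ite, Finset.prod_const, Finset.prod_const, hamming_eq_card]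
  have h := Finset.card_filter_add_card_filter_not
    (s := (Finset.univ : Finset (Fin n))) (p := fun i => r i = true)
  simp only [Finset.card_univ, Fintype.card_fin] at h
  have hcard : (Finset.univ.filter fun i => ¬ (r i = true)).card
      = n - (Finset.univ.filter fun i => r i = true).card := by omega
  rw [hcard, mul_comm]

lemma sum_weight {n : ℕ} {M : Type*} [CommSemiring M] (a b : M) :
    ∑ r : Fin n → Bool, a ^ (n - hamming r) * b ^ hamming r = (a + b) ^ n := by
  have h : ∀ r : Fin n → Bool, a ^ (n - hamming r) * b ^ hamming r
      = ∏ i, (if r i then b else a) := fun r => (prod_ite_weight a b r).symm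
  simp only [h]
  rw [sum_prod_bool (fun _ c => if c then b else a)]
  simp [add_comm]

/-- The dual certificate `N = ∑ₓ 2^{-n} |Ψₓ⟩⟨Ψₓ|ζₓ⟩⟨ζₓ|` for the PBR game is the
diagonal matrix with entry `C(θ)` at index `0⃗` and `-C(θ) tan(θ/2)^{|r|}` at each
index `r ≠ 0⃗`, where `C(θ) = 2^{-n} cos(θ/2)^{2n} (2 - (1 + tan(θ/2))^n)`; in
particular `tr(N) = 2^{-n} cos(θ/2)^{2n} (2 - (1 + tan(θ/2))^n)²`. -/
theorem pbr_dual_certificate_diagonal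
    {n : ℕ} (hn : 1 ≤ n) (θ : ℝ) (hθ0 : 0 ≤ θ) (hθ1 : θ < Real.pi)
    (Ψ ζ : (Fin n → Bool) → (Fin n → Bool) → ℂ)
    (hΨ : ∀ x r, Ψ x r = (-1 : ℂ) ^ bdot x r *
      ((Real.cos (θ / 2) ^ (n - hamming r) * Real.sin (θ / 2) ^ hamming r : ℝ) : ℂ))
    (hζ : ∀ x r, ζ x r =
      if r = (fun _ => false) then ((1 / Real.sqrt (2 ^ n) : ℝ) : ℂ)
      else -(-1 : ℂ) ^ bdot x r * ((1 / Real.sqrt (2 ^ n) : ℝ) : ℂ))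
    (N : Matrix (Fin n → Bool) (Fin n → Bool) ℂ)
    (hN : N = ∑ x, ((2 : ℂ) ^ n)⁻¹ •
      (∑ s, (starRingEnd ℂ) (Ψ x s) * ζ x s) •
        Matrix.vecMulVec (Ψ x) (fun q => (starRingEnd ℂ) (ζ x q)))
    (C : ℝ)
    (hC : C = (2 ^ n : ℝ)⁻¹ * Real.cos (θ / 2) ^ (2 * n) *
      (2 - (1 + Real.tan (θ / 2)) ^ n)) :
    N = Matrix.diagonal (fun r =>
        if r = (fun _ => false) then (C : ℂ)
        else -(C : ℂ) * ((Real.tan (θ / 2) ^ hamming r : ℝ) : ℂ)) ∧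
    N.trace = (((2 ^ n : ℝ)⁻¹ * Real.cos (θ / 2) ^ (2 * n) *
      (2 - (1 + Real.tan (θ / 2)) ^ n) ^ 2 : ℝ) : ℂ) := by
  set c := Real.cos (θ / 2) with hc_def
  set sn := Real.sin (θ / 2) with hs_def
  set t := Real.tan (θ / 2) with ht_def
  set u : ℝ := 1 / Real.sqrt (2 ^ n) with hu_def
  set z : Fin n → Bool := fun _ => false with hz_def
  have hc : 0 < c := by
    rw [hc_def]
    apply Real.cos_pos_of_mem_Ioo
    constructor <;> [linarith [Real.pi_pos]; linarith]
  have hcs : c + sn = c * (1 + t) := by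
    rw [ht_def, hs_def, hc_def, Real.tan_eq_sin_div_cos]
    have hc' : Real.cos (θ / 2) ≠ 0 := hc.ne'
    field_simp
  have hst : sn = c * t := by
    rw [ht_def, hs_def, hc_def, Real.tan_eq_sin_div_cos]
    have hc' : Real.cos (θ / 2) ≠ 0 := hc.ne'
    field_simp
  have h2n : (2 : ℝ) ^ n ≠ 0 := by positivity
  have huu : u * u = ((2 : ℝ) ^ n)⁻¹ := by
    rw [hu_def, div_mul_div_comm, one_mul, Real.mul_self_sqrt (by positivity)]
    rw [one_div]
  have hbz : ∀ x : Fin n → Bool, bdot x z = 0 := fun x => by simp [bdot, hz_def]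
  have hhz : hamming z = 0 := by simp [hamming, hz_def]
  set w : (Fin n → Bool) → ℝ := fun r => c ^ (n - hamming r) * sn ^ hamming r with hw_def
  have hwz : w z = c ^ n := by simp [hw_def, hhz]
  have hsw : ∑ r : Fin n → Bool, w r = (c + sn) ^ n := sum_weight c sn
  have hcn : (c + sn) ^ n = c ^ n * (1 + t) ^ n := by rw [hcs, mul_pow]
  have hc2n : c ^ (2 * n) = c ^ n * c ^ n := by rw [two_mul, pow_add]
  have hwr : ∀ r : Fin n → Bool, w r = c ^ n * t ^ hamming r := by
    intro r
    rw [hw_def]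
    simp only
    rw [hst, mul_pow, ← mul_assoc, ← pow_add, Nat.sub_add_cancel (hamming_le r)]
  -- inner product
  have hA : ∀ x, (∑ s, (starRingEnd ℂ) (Ψ x s) * ζ x s)
      = (u : ℂ) * ((2 * c ^ n - (c + sn) ^ n : ℝ) : ℂ) := by
    intro x
    have hterm : ∀ s, (starRingEnd ℂ) (Ψ x s) * ζ x s
        = (if s = z then 2 * ((w s : ℝ) : ℂ) * (u : ℂ) else 0) - ((w s : ℝ) : ℂ) * (u : ℂ) := by
      intro s
      rw [hΨ, hζ]
      by_cases hs : s = z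
      · rw [if_pos hs, if_pos hs]
        subst hs
        simp only [hbz, pow_zero, one_mul, _root_.map_mul, map_pow, Complex.conj_ofReal, hwz, hhz]
        push_cast [hhz, Nat.sub_zero]
        ring
      · rw [if_neg hs, if_neg hs]
        simp only [_root_.map_mul, map_pow, map_neg, _root_.map_one, Complex.conj_ofReal]
        have hsq : ((-1 : ℂ)) ^ bdot x s * (-1 : ℂ) ^ bdot x s = 1 := by
          rw [← pow_add]
          exact Even.neg_one_pow ⟨_, rfl⟩
        have : (-1 : ℂ) ^ bdot x s * ((c ^ (n - hamming s) * sn ^ hamming s : ℝ) : ℂ) *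
            (-(-1 : ℂ) ^ bdot x s * ((u : ℝ) : ℂ))
            = -(((-1 : ℂ) ^ bdot x s * (-1 : ℂ) ^ bdot x s) *
              (((c ^ (n - hamming s) * sn ^ hamming s : ℝ) : ℂ) * ((u : ℝ) : ℂ))) := by ring
        rw [this, hsq, one_mul, hw_def]
        push_cast
        ring
    rw [Finset.sum_congr rfl fun s _ => hterm s, Finset.sum_sub_distrib,
      Finset.sum_ite_eq' Finset.univ z (fun s => 2 * ((w s : ℝ) : ℂ) * (u : ℂ))]
    simp only [Finset.mem_univ, if_pos, hwz]
    have : ∑ s : Fin n → Bool, ((w s : ℝ) : ℂ) * (u : ℂ)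
        = (((c + sn) ^ n : ℝ) : ℂ) * (u : ℂ) := by
      rw [← Finset.sum_mul, ← hsw]
      push_cast
      ring
    rw [this]
    push_cast
    ring
  -- column sums
  have hS : ∀ p q : Fin n → Bool, (∑ x, Ψ x p * (starRingEnd ℂ) (ζ x q))
      = ((w p : ℝ) : ℂ) * (u : ℂ) *
        (if q = z then (if p = z then (2 : ℂ) ^ n else 0)
         else -(if p = q then (2 : ℂ) ^ n else 0)) := by
    intro p q
    have hterm : ∀ x, Ψ x p * (starRingEnd ℂ) (ζ x q)
        = ((w p : ℝ) : ℂ) * (u : ℂ) *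
          ((-1 : ℂ) ^ bdot x p * (if q = z then 1 else -(-1 : ℂ) ^ bdot x q)) := by
      intro x
      rw [hΨ, hζ]
      by_cases hq : q = z
      · rw [if_pos hq, if_pos hq, Complex.conj_ofReal, hw_def]
        push_cast
        ring
      · rw [if_neg hq, if_neg hq]
        simp only [_root_.map_mul, map_pow, map_neg, _root_.map_one, Complex.conj_ofReal, hw_def]
        push_cast
        ring
    rw [Finset.sum_congr rfl fun x _ => hterm x, ← Finset.mul_sum]
    congr 1
    by_cases hq : q = z
    · simp only [if_pos hq]
      have h0 := sum_sign p z
      simp only [hbz, pow_zero, mul_one] at h0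
      simpa using h0
    · simp only [if_neg hq, mul_neg, Finset.sum_neg_distrib]
      rw [sum_sign p q]
  -- entry formula
  have hNE : ∀ p q : Fin n → Bool, N p q
      = ((2 : ℂ) ^ n)⁻¹ * ((u : ℂ) * ((2 * c ^ n - (c + sn) ^ n : ℝ) : ℂ)) *
        (((w p : ℝ) : ℂ) * (u : ℂ) *
          (if q = z then (if p = z then (2 : ℂ) ^ n else 0)
           else -(if p = q then (2 : ℂ) ^ n else 0))) := by
    intro p q
    rw [hN]
    simp only [Matrix.sum_apply, Matrix.smul_apply, Matrix.vecMulVec_apply, smul_eq_mul, hA]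
    rw [← hS p q, Finset.mul_sum]
    exact Finset.sum_congr rfl fun x _ => by ring
  -- real scalar identities
  have key0 : ((2:ℝ)^n)⁻¹ * (u * (2*c^n - (c+sn)^n)) * (c^n * u * 2^n) = C := by
    have h1 : ((2:ℝ)^n)⁻¹ * (u * (2*c^n - (c+sn)^n)) * (c^n * u * 2^n)
        = (u*u) * (((2:ℝ)^n)⁻¹ * 2^n) * (c^n * (2*c^n - (c+sn)^n)) := by ring
    rw [h1, huu, inv_mul_cancel₀ h2n, hcn, hC, hc2n]
    ring
  have keyr : ∀ r : Fin n → Bool,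
      ((2:ℝ)^n)⁻¹ * (u * (2*c^n - (c+sn)^n)) * (w r * u * (-(2^n)))
        = -(C * t^(hamming r)) := by
    intro r
    have h1 : ((2:ℝ)^n)⁻¹ * (u * (2*c^n - (c+sn)^n)) * (w r * u * (-(2^n)))
        = (u*u) * (((2:ℝ)^n)⁻¹ * 2^n) * (-(w r * (2*c^n - (c+sn)^n))) := by ring
    rw [h1, huu, inv_mul_cancel₀ h2n, hwr r, hcn, hC, hc2n]
    ring
  have hdiag : N = Matrix.diagonal (fun r =>
      if r = z then (C : ℂ) else -(C : ℂ) * ((t ^ hamming r : ℝ) : ℂ)) := by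
    ext p q
    rw [hNE p q]
    by_cases hpq : p = q
    · subst hpq
      rw [Matrix.diagonal_apply_eq]
      by_cases hp : p = z
      · rw [if_pos hp, if_pos hp, if_pos hp, hp, hwz]
        have h0 := congrArg (Complex.ofReal) key0
        push_cast at h0 ⊢
        linear_combination h0
      · rw [if_neg hp, if_pos rfl, if_neg hp]
        have h0 := congrArg (Complex.ofReal) (keyr p)
        push_cast at h0 ⊢
        linear_combination h0
    · rw [Matrix.diagonal_apply_ne _ hpq]
      by_cases hq : q = z
      · have hp : ¬ p = z := fun h => hpq (h.trans hq.symm)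
        rw [if_pos hq, if_neg hp, mul_zero, mul_zero]
      · rw [if_neg hq, if_neg hpq]
        simp
  refine ⟨hdiag, ?_⟩
  rw [hdiag, Matrix.trace_diagonal]
  have hcast : ∀ r : Fin n → Bool,
      (if r = z then (C:ℂ) else -(C:ℂ) * ((t ^ hamming r : ℝ) : ℂ))
        = (((if r = z then C else -(C * t ^ hamming r)) : ℝ) : ℂ) := by
    intro r
    by_cases hr : r = z
    · simp [hr]
    · simp only [if_neg hr]
      push_cast
      ring
  rw [Finset.sum_congr rfl fun r _ => hcast r, ← Complex.ofReal_sum]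
  norm_cast
  have hsum_t : ∑ r : Fin n → Bool, t ^ hamming r = (1 + t)^n := by
    have h := sum_weight (M := ℝ) (n := n) 1 t
    simpa using h
  have hsplit : ∀ r : Fin n → Bool, (if r = z then C else -(C * t ^ hamming r))
      = -(C * t ^ hamming r) + (if r = z then 2*C else 0) := by
    intro r
    by_cases hr : r = z
    · rw [if_pos hr, if_pos hr, hr, hhz, pow_zero]
      ring
    · simp [hr]
  rw [Finset.sum_congr rfl fun r _ => hsplit r, Finset.sum_add_distrib,
    Finset.sum_neg_distrib, ← Finset.mul_sum, hsum_t,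
    Finset.sum_ite_eq' Finset.univ z (fun _ => 2*C)]
  simp only [Finset.mem_univ, if_pos]
  rw [hC]
  push_cast
  ring
end
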